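/- Let R = 𝔽₂ + u𝔽₂ (u² = 0), realized as DualNumber (ZMod 2), and let φ : R → (ZMod 2) × (ZMod 2) be the Gray map φ(a + bu) = (b, a + b). Let Φ : Rⁿ → (ZMod 2)^{2n} be φ applied coordinatewise (so Φ(v) ∈ (Fin n → ZMod 2 × ZMod 2), identified with a binary vector of length 2n). If C is a submodule of Rⁿ with C = C⊥ (self-dual with respect to the form ∑ᵢ vᵢwᵢ over R), then the image Φ(C), which is a ZMod 2-subspace of (ZMod 2)^{2n}, satisfies Φ(C) = Φ(C)⊥ with respect to the form summing the products of all 2n binary coordinates; i.e. the image is a binary self-dual code of length 2n. -/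
import Mathlib

def grayMap (x : DualNumber (ZMod 2)) : ZMod 2 × ZMod 2 :=
  (x.snd, x.fst + x.snd)

def dualCode {R : Type*} [CommRing R] {ι : Type*} [Fintype ι]
    (C : Submodule R (ι → R)) : Submodule R (ι → R) where
  carrier := {w | ∀ v ∈ C, ∑ i, v i * w i = 0}
  zero_mem' := by intro v _; simp
  add_mem' := by
    intro a b ha hb v hv
    have h1 := ha v hv
    have h2 := hb v hv
    simp only [Pi.add_apply, mul_add, Finset.sum_add_distrib, h1, h2, add_zero]
  smul_mem' := by
    intro c w hw v hv
    have h := hw v hv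
    have : ∑ i, v i * (c • w) i = c * ∑ i, v i * w i := by
      rw [Finset.mul_sum]
      exact Finset.sum_congr rfl fun i _ => by
        simp [smul_eq_mul, mul_left_comm]
    simp only [Set.mem_setOf_eq] at *
    simpa [h] using this

lemma gray_inner (x y : DualNumber (ZMod 2)) :
    (grayMap x).1 * (grayMap y).1 + (grayMap x).2 * (grayMap y).2
      = (x * y).fst + (x * y).snd := by
  simp only [grayMap, TrivSqZeroExt.fst_mul, TrivSqZeroExt.snd_mul, smul_eq_mul,
    MulOpposite.smul_eq_mul_unop, MulOpposite.unop_op]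
  have : ∀ a b c d : ZMod 2, b * d + (a + b) * (c + d) = a * c + (a * d + b * c) := by decide
  exact this x.fst x.snd y.fst y.snd

theorem stmt9 {n : ℕ}
    (Φ : (Fin n → DualNumber (ZMod 2)) → (Fin n → ZMod 2 × ZMod 2))
    (hΦ : Φ = fun v i => grayMap (v i))
    (C : Submodule (DualNumber (ZMod 2)) (Fin n → DualNumber (ZMod 2)))
    (hC : C = dualCode C) :
    Φ '' (C : Set (Fin n → DualNumber (ZMod 2))) =
      {w : Fin n → ZMod 2 × ZMod 2 |
        ∀ v ∈ Φ '' (C : Set (Fin n → DualNumber (ZMod 2))),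
          ∑ i, ((v i).1 * (w i).1 + (v i).2 * (w i).2) = 0} := by
  subst hΦ
  have key : ∀ x w : Fin n → DualNumber (ZMod 2),
      (∑ i, ((grayMap (x i)).1 * (grayMap (w i)).1 + (grayMap (x i)).2 * (grayMap (w i)).2))
        = (∑ i, x i * w i).fst + (∑ i, x i * w i).snd := by
    intro x w
    rw [TrivSqZeroExt.fst_sum, TrivSqZeroExt.snd_sum, ← Finset.sum_add_distrib]
    exact Finset.sum_congr rfl fun i _ => gray_inner (x i) (w i)
  ext w
  constructor
  · rintro ⟨x, hx, rfl⟩ v ⟨z, hz, rfl⟩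
    have hzx : ∑ i, z i * x i = 0 := by
      have := hC ▸ hx
      exact this z hz
    rw [key z x, hzx]
    simp
  · intro hw
    -- preimage of w
    set x : Fin n → DualNumber (ZMod 2) := fun i => (((w i).2 + (w i).1, (w i).1) : ZMod 2 × ZMod 2)
      with hxdef
    have hgx : ∀ i, grayMap (x i) = w i := by
      intro i
      have : ∀ s t : ZMod 2, grayMap ((t + s, s) : ZMod 2 × ZMod 2) = (s, t) := by decide
      simpa [hxdef] using this (w i).1 (w i).2
    have hxC : x ∈ C := by
      rw [hC]
      intro z hz
      have h1 := hw _ ⟨z, hz, rfl⟩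
      have h2 := hw _ ⟨((DualNumber.eps : DualNumber (ZMod 2)) • z), C.smul_mem _ hz, rfl⟩
      simp only [← hgx] at h1 h2
      rw [key] at h1 h2
      set s := ∑ i, z i * x i with hs
      have heps : ∑ i, ((DualNumber.eps : DualNumber (ZMod 2)) • z) i * x i = DualNumber.eps * s := by
        rw [hs, Finset.mul_sum]
        exact Finset.sum_congr rfl fun i _ => by simp [smul_eq_mul, mul_assoc]
      rw [heps] at h2
      have hfst : s.fst = 0 := by
        simpa [TrivSqZeroExt.fst_mul, TrivSqZeroExt.snd_mul, DualNumber.fst_eps,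
          DualNumber.snd_eps] using h2
      have hsnd : s.snd = 0 := by rw [hfst, zero_add] at h1; exact h1
      exact TrivSqZeroExt.ext hfst hsnd
    exact ⟨x, hxC, funext hgx⟩
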